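/- For every n ∈ ℕ, the rational number 729^n · (1/9)_n (4/9)_n (5/9)_n / ((1/3)_n · (n!)²) is an integer. (Equivalently, the hypergeometric series ₃F₂([1/9, 4/9, 5/9], [1/3, 1], 27²·x) has integer Taylor coefficients: 1 + 60x + 20475x² + 9373650x³ + 4881796920x⁴ + ⋯.) -/

import Mathlib

open Finset

namespace HG

/-- The number of `k < n` with `k % q = r` equals `(n + q - 1 - r) / q`. -/
lemma count_mod_card {q : ℕ} (r : ℕ) (hr : r < q) (n : ℕ) :
    ((range n).filter (fun k => k % q = r)).card = (n + q - 1 - r) / q := by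
  have hq : 0 < q := by omega
  induction n with
  | zero => simpa using (Nat.div_eq_of_lt (show 0 + q - 1 - r < q by omega)).symm
  | succ n ih =>
      rw [range_add_one, filter_insert]
      by_cases h : n % q = r
      · rw [if_pos h, card_insert_of_notMem (by simp), ih]
        obtain ⟨m, hm⟩ : ∃ m, n = q * m + r := ⟨n / q, by rw [← h]; exact (Nat.div_add_mod n q).symm⟩
        subst hm
        rw [show q * m + r + 1 + q - 1 - r = q * m + q + 0 by omega,
            show q * m + r + q - 1 - r = q * m + (q - 1) by omega,
            show q * m + q + 0 = q * (m + 1) + 0 by ring]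
        rw [Nat.mul_add_div hq, Nat.mul_add_div hq, Nat.div_eq_of_lt (by omega),
            Nat.div_eq_of_lt (by omega)]
      · rw [if_neg h, ih]
        obtain ⟨m, t, ht, htr, hm⟩ : ∃ m t, t < q ∧ t ≠ r ∧ n = q * m + t :=
          ⟨n / q, n % q, Nat.mod_lt _ hq, h, (Nat.div_add_mod n q).symm⟩
        subst hm
        rcases Nat.lt_or_ge t r with hlt | hge
        · rw [show q * m + t + 1 + q - 1 - r = q * m + (t + q - r) by omega,
              show q * m + t + q - 1 - r = q * m + (t + q - 1 - r) by omega,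
              Nat.mul_add_div hq, Nat.mul_add_div hq,
              Nat.div_eq_of_lt (by omega), Nat.div_eq_of_lt (by omega)]
        · have hgt : r < t := by omega
          rw [show q * m + t + 1 + q - 1 - r = q * m + q + (t - r) by omega,
              show q * m + t + q - 1 - r = q * m + q + (t - 1 - r) by omega,
              show q * m + q + (t - r) = q * (m + 1) + (t - r) by ring,
              show q * m + q + (t - 1 - r) = q * (m + 1) + (t - 1 - r) by ring,
              Nat.mul_add_div hq, Nat.mul_add_div hq,
              Nat.div_eq_of_lt (by omega), Nat.div_eq_of_lt (by omega)]

set_option maxHeartbeats 2000000 in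
/-- The key arithmetic fact: if `q ∣ 9w + 1` and `w < q` then among the residues of
`w, 4w, 5w` mod `q` at least one is `≤` the residue of `3w` mod `q`. -/
lemma key_mod {q w : ℕ} (hq : 1 < q) (hw : w < q) (hd : q ∣ 9 * w + 1) :
    min w (min ((4 * w) % q) ((5 * w) % q)) ≤ (3 * w) % q := by
  have hq0 : 0 < q := by omega
  obtain ⟨c, hc⟩ := hd
  have hc1 : 1 ≤ c := Nat.pos_of_ne_zero (by rintro rfl; omega)
  have hc9 : c ≤ 9 := by
    have h1 : q * c ≤ q * 9 := by rw [← hc]; omega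
    exact Nat.le_of_mul_le_mul_left h1 hq0
  have e3 := Nat.div_add_mod (3 * w) q
  have e4 := Nat.div_add_mod (4 * w) q
  have e5 := Nat.div_add_mod (5 * w) q
  have m3 : (3 * w) % q < q := Nat.mod_lt _ hq0
  have m4 : (4 * w) % q < q := Nat.mod_lt _ hq0
  have m5 : (5 * w) % q < q := Nat.mod_lt _ hq0
  have d3 : 3 * w / q < 3 := Nat.div_lt_of_lt_mul (by omega)
  have d4 : 4 * w / q < 4 := Nat.div_lt_of_lt_mul (by omega)
  have d5 : 5 * w / q < 5 := Nat.div_lt_of_lt_mul (by omega)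
  set b3 := (3 * w) % q with hb3
  set b4 := (4 * w) % q with hb4
  set b5 := (5 * w) % q with hb5
  set j3 := 3 * w / q with hj3
  set j4 := 4 * w / q with hj4
  set j5 := 5 * w / q with hj5
  clear_value b3 b4 b5 j3 j4 j5
  clear hb3 hb4 hb5 hj3 hj4 hj5
  interval_cases j3 <;> interval_cases j4 <;> interval_cases j5 <;> interval_cases c <;> omega

lemma dvd_lin_iff {q s a v : ℕ} (hco : Nat.Coprime s q) (hv : q ∣ s * v + a) (k : ℕ) :
    q ∣ s * k + a ↔ k % q = v % q := by
  constructor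
  · intro h
    have h1 : s * k + a ≡ s * v + a [MOD q] :=
      (Nat.modEq_zero_iff_dvd.2 h).trans (Nat.modEq_zero_iff_dvd.2 hv).symm
    exact Nat.ModEq.cancel_left_of_coprime hco.symm (Nat.ModEq.add_right_cancel' a h1)
  · intro h
    have h2 : s * k + a ≡ s * v + a [MOD q] :=
      Nat.ModEq.add_right a (Nat.ModEq.mul_left s h)
    exact Nat.modEq_zero_iff_dvd.1 (h2.trans (Nat.modEq_zero_iff_dvd.2 hv))

/-- The key counting inequality, for any modulus `q > 1` coprime to `3`. -/
lemma key_count {q : ℕ} (hq : 1 < q) (h3 : Nat.Coprime 3 q) (n : ℕ) :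
    ((range n).filter (fun k => q ∣ 3 * k + 1)).card + 2 * (n / q)
      ≤ ((range n).filter (fun k => q ∣ 9 * k + 1)).card
        + ((range n).filter (fun k => q ∣ 9 * k + 4)).card
        + ((range n).filter (fun k => q ∣ 9 * k + 5)).card := by
  have hq0 : 0 < q := by omega
  have h9 : Nat.Coprime 9 q := by
    have := Nat.Coprime.mul h3 h3
    norm_num at this
    exact this
  obtain ⟨w, hw, hd⟩ : ∃ w, w < q ∧ q ∣ 9 * w + 1 := by
    obtain ⟨bb, -, hbb⟩ := Nat.exists_mul_mod_eq_one_of_coprime h9 hq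
    refine ⟨((q - 1) * bb) % q, Nat.mod_lt _ hq0, ?_⟩
    have h1 : 9 * (((q - 1) * bb) % q) ≡ (q - 1) * (9 * bb) [MOD q] := by
      calc 9 * (((q - 1) * bb) % q) ≡ 9 * ((q - 1) * bb) [MOD q] :=
            Nat.ModEq.mul_left 9 (Nat.mod_modEq _ _)
        _ = (q - 1) * (9 * bb) := by ring
    have h2 : (q - 1) * (9 * bb) ≡ (q - 1) * 1 [MOD q] := by
      refine Nat.ModEq.mul_left _ ?_
      show 9 * bb % q = 1 % q
      rw [hbb, Nat.mod_eq_of_lt hq]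
    have h3' := (h1.trans h2).add_right 1
    rw [show (q - 1) * 1 + 1 = q by omega] at h3'
    exact Nat.modEq_zero_iff_dvd.1 (h3'.trans (Nat.modEq_zero_iff_dvd.2 ⟨1, by omega⟩))
  have hd4 : q ∣ 9 * (4 * w) + 4 := by
    have h := hd.mul_left 4
    rwa [show 4 * (9 * w + 1) = 9 * (4 * w) + 4 by ring] at h
  have hd5 : q ∣ 9 * (5 * w) + 5 := by
    have h := hd.mul_left 5
    rwa [show 5 * (9 * w + 1) = 9 * (5 * w) + 5 by ring] at h
  have hd3 : q ∣ 3 * (3 * w) + 1 := by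
    rwa [show 3 * (3 * w) + 1 = 9 * w + 1 by ring]
  have hd1 : q ∣ 9 * w + 1 := hd
  have r1 : ((range n).filter (fun k => q ∣ 9 * k + 1)).card = (n + q - 1 - w % q) / q := by
    rw [filter_congr (fun k _ => by simpa using propext (dvd_lin_iff h9 hd1 k))]
    exact count_mod_card _ (Nat.mod_lt _ hq0) n
  have r4 : ((range n).filter (fun k => q ∣ 9 * k + 4)).card = (n + q - 1 - (4 * w) % q) / q := by
    rw [filter_congr (fun k _ => by simpa using propext (dvd_lin_iff h9 hd4 k))]
    exact count_mod_card _ (Nat.mod_lt _ hq0) n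
  have r5 : ((range n).filter (fun k => q ∣ 9 * k + 5)).card = (n + q - 1 - (5 * w) % q) / q := by
    rw [filter_congr (fun k _ => by simpa using propext (dvd_lin_iff h9 hd5 k))]
    exact count_mod_card _ (Nat.mod_lt _ hq0) n
  have r3 : ((range n).filter (fun k => q ∣ 3 * k + 1)).card = (n + q - 1 - (3 * w) % q) / q := by
    rw [filter_congr (fun k _ => by simpa using propext (dvd_lin_iff h3 hd3 k))]
    exact count_mod_card _ (Nat.mod_lt _ hq0) n
  rw [r1, r4, r5, r3]
  have hmin := key_mod hq hw hd
  rw [Nat.mod_eq_of_lt hw] at r1 ⊢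
  have hnq : ∀ r : ℕ, r < q → n / q ≤ (n + q - 1 - r) / q := fun r hr =>
    Nat.div_le_div_right (by omega)
  have hanti : ∀ r r' : ℕ, r ≤ r' → (n + q - 1 - r') / q ≤ (n + q - 1 - r) / q := fun r r' h =>
    Nat.div_le_div_right (by omega)
  have hm4 : (4 * w) % q < q := Nat.mod_lt _ hq0
  have hm5 : (5 * w) % q < q := Nat.mod_lt _ hq0
  rcases min_le_iff.1 hmin with h | h'
  · calc (n + q - 1 - (3 * w) % q) / q + 2 * (n / q)
        ≤ (n + q - 1 - w) / q + ((n + q - 1 - (4 * w) % q) / q + (n + q - 1 - (5 * w) % q) / q) :=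
          add_le_add (hanti _ _ h) (by rw [two_mul]; exact add_le_add (hnq _ hm4) (hnq _ hm5))
      _ = _ := by ring
  · rcases min_le_iff.1 h' with h | h
    · calc (n + q - 1 - (3 * w) % q) / q + 2 * (n / q)
          ≤ (n + q - 1 - (4 * w) % q) / q + ((n + q - 1 - w) / q + (n + q - 1 - (5 * w) % q) / q) :=
            add_le_add (hanti _ _ h) (by rw [two_mul]; exact add_le_add (hnq _ hw) (hnq _ hm5))
        _ = _ := by ring
    · calc (n + q - 1 - (3 * w) % q) / q + 2 * (n / q)
          ≤ (n + q - 1 - (5 * w) % q) / q + ((n + q - 1 - w) / q + (n + q - 1 - (4 * w) % q) / q) :=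
            add_le_add (hanti _ _ h) (by rw [two_mul]; exact add_le_add (hnq _ hw) (hnq _ hm4))
        _ = _ := by ring

lemma val_single {p m : ℕ} (hp : p.Prime) (hm : m ≠ 0) {b : ℕ} (hb : m.factorization p < b) :
    m.factorization p = ∑ i ∈ Ico 1 b, (if p ^ i ∣ m then 1 else 0) := by
  have h1 : ∀ i ∈ Ico 1 b, (if p ^ i ∣ m then (1:ℕ) else 0)
      = (if i ≤ m.factorization p then 1 else 0) := fun i _ => by
    rw [if_congr (hp.pow_dvd_iff_le_factorization hm) rfl rfl]
  rw [Finset.sum_congr rfl h1, Finset.sum_boole]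
  have h2 : (Ico 1 b).filter (fun i => i ≤ m.factorization p) = Ico 1 (m.factorization p + 1) := by
    ext x
    simp only [mem_filter, mem_Ico]
    omega
  rw [h2, Nat.card_Ico]
  simp

lemma val_prod {p b n : ℕ} (hp : p.Prime) (f : ℕ → ℕ) (hf : ∀ k, k < n → f k ≠ 0)
    (hb : ∀ k, k < n → (f k).factorization p < b) :
    (∏ k ∈ range n, f k).factorization p
      = ∑ i ∈ Ico 1 b, ((range n).filter (fun k => p ^ i ∣ f k)).card := by
  rw [Nat.factorization_prod (fun k hk => hf k (mem_range.1 hk))]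
  rw [Finset.sum_apply']
  rw [Finset.sum_congr rfl
    (fun k hk => val_single hp (hf k (mem_range.1 hk)) (hb k (mem_range.1 hk)))]
  rw [Finset.sum_comm]
  exact Finset.sum_congr rfl fun i _ => by rw [Finset.sum_boole]; simp

lemma val_factorial {p n b : ℕ} (hp : p.Prime) (hb : Nat.log p n < b) :
    (n.factorial).factorization p = ∑ i ∈ Ico 1 b, n / p ^ i := by
  haveI : Fact p.Prime := ⟨hp⟩
  rw [Nat.factorization_def _ hp]
  exact padicValNat_factorial hb

lemma two_mul_val_three_factorial (n : ℕ) : 2 * (n.factorial).factorization 3 ≤ n := by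
  haveI : Fact (Nat.Prime 3) := ⟨by norm_num⟩
  rw [Nat.factorization_def _ (by norm_num)]
  have h := sub_one_mul_padicValNat_factorial (p := 3) n
  omega

/-- The main divisibility. -/
lemma main_dvd (n : ℕ) :
    (∏ k ∈ range n, (3 * k + 1)) * (n.factorial) ^ 2 ∣
      3 ^ n * ((∏ k ∈ range n, (9 * k + 1)) * (∏ k ∈ range n, (9 * k + 4))
        * (∏ k ∈ range n, (9 * k + 5))) := by
  have hE : (∏ k ∈ range n, (3 * k + 1)) ≠ 0 := by positivity
  have hA : (∏ k ∈ range n, (9 * k + 1)) ≠ 0 := by positivity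
  have hB : (∏ k ∈ range n, (9 * k + 4)) ≠ 0 := by positivity
  have hC : (∏ k ∈ range n, (9 * k + 5)) ≠ 0 := by positivity
  have hF : (n.factorial) ^ 2 ≠ 0 := pow_ne_zero _ (Nat.factorial_ne_zero n)
  rw [← Nat.factorization_le_iff_dvd (mul_ne_zero hE hF)
      (mul_ne_zero (pow_ne_zero _ (by norm_num)) (mul_ne_zero (mul_ne_zero hA hB) hC))]
  rw [Finsupp.le_def]
  intro p
  by_cases hp : p.Prime
  swap
  · simp [Nat.factorization_eq_zero_of_not_prime _ hp]
  have hDf : ((∏ k ∈ range n, (3 * k + 1)) * (n.factorial) ^ 2).factorization p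
      = (∏ k ∈ range n, (3 * k + 1)).factorization p + 2 * (n.factorial).factorization p := by
    rw [Nat.factorization_mul hE hF, Nat.factorization_pow]
    simp
  have hNf : (3 ^ n * ((∏ k ∈ range n, (9 * k + 1)) * (∏ k ∈ range n, (9 * k + 4))
        * (∏ k ∈ range n, (9 * k + 5)))).factorization p
      = n * (Nat.factorization 3) p
        + ((∏ k ∈ range n, (9 * k + 1)).factorization p
          + (∏ k ∈ range n, (9 * k + 4)).factorization p
          + (∏ k ∈ range n, (9 * k + 5)).factorization p) := by
    rw [Nat.factorization_mul (pow_ne_zero _ (by norm_num))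
        (mul_ne_zero (mul_ne_zero hA hB) hC),
      Nat.factorization_mul (mul_ne_zero hA hB) hC, Nat.factorization_mul hA hB,
      Nat.factorization_pow]
    simp [add_assoc]
  rw [hDf, hNf]
  by_cases hp3 : p = 3
  · subst hp3
    have hE0 : (∏ k ∈ range n, (3 * k + 1)).factorization 3 = 0 := by
      apply Nat.factorization_eq_zero_of_not_dvd
      intro h
      obtain ⟨k, -, hk⟩ :=
        (Nat.prime_iff.1 (by norm_num : Nat.Prime 3)).dvd_finset_prod_iff _ |>.1 h
      omega
    rw [hE0, Nat.Prime.factorization_self (by norm_num), mul_one]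
    have := two_mul_val_three_factorial n
    omega
  · have h30 : (Nat.factorization 3) p = 0 :=
      Nat.factorization_eq_zero_of_not_dvd
        (fun h => hp3 ((Nat.prime_dvd_prime_iff_eq hp (by norm_num)).1 h))
    rw [h30, mul_zero, zero_add]
    set b := 10 * n + 6 with hb
    have hlt : ∀ m : ℕ, m ≠ 0 → m ≤ 10 * n + 5 → m.factorization p < b := fun m hm hm' =>
      lt_of_lt_of_le (Nat.factorization_lt p hm) (by omega)
    rw [val_prod hp _ (fun k _ => by omega) (fun k hk => hlt _ (by omega) (by omega)),
        val_prod hp _ (fun k _ => by omega) (fun k hk => hlt _ (by omega) (by omega)),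
        val_prod hp _ (fun k _ => by omega) (fun k hk => hlt _ (by omega) (by omega)),
        val_prod hp _ (fun k _ => by omega) (fun k hk => hlt _ (by omega) (by omega)),
        val_factorial (b := b) hp (lt_of_le_of_lt (Nat.log_le_self p n) (by omega))]
    rw [Finset.mul_sum, ← Finset.sum_add_distrib, ← Finset.sum_add_distrib,
        ← Finset.sum_add_distrib]
    apply Finset.sum_le_sum
    intro i hi
    have hi1 : 1 ≤ i := (mem_Ico.1 hi).1
    have hq : 1 < p ^ i := Nat.one_lt_pow (by omega) hp.one_lt
    have hco : Nat.Coprime 3 (p ^ i) :=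
      Nat.Coprime.pow_right i (((Nat.coprime_primes (by norm_num) hp).2 (fun h => hp3 h.symm)))
    exact key_count hq hco n

lemma asc_eval (n : ℕ) (x : ℚ) :
    (ascPochhammer ℚ n).eval x = ∏ k ∈ range n, (x + k) := by
  induction n with
  | zero => simp [ascPochhammer_zero]
  | succ n ih =>
    rw [ascPochhammer_succ_right, Polynomial.eval_mul, ih, prod_range_succ,
      Polynomial.eval_add, Polynomial.eval_X, Polynomial.eval_natCast]

lemma nine_pow_asc (n : ℕ) (a : ℕ) :
    (9 : ℚ) ^ n * (ascPochhammer ℚ n).eval ((a : ℚ) / 9)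
      = ((∏ k ∈ range n, (9 * k + a) : ℕ) : ℚ) := by
  rw [asc_eval, Nat.cast_prod,
    show (9 : ℚ) ^ n = ∏ _k ∈ range n, (9 : ℚ) by rw [Finset.prod_const, card_range],
    ← Finset.prod_mul_distrib]
  refine Finset.prod_congr rfl fun k _ => ?_
  push_cast
  ring

lemma three_pow_asc (n : ℕ) :
    (3 : ℚ) ^ n * (ascPochhammer ℚ n).eval (1 / 3)
      = ((∏ k ∈ range n, (3 * k + 1) : ℕ) : ℚ) := by
  rw [asc_eval, Nat.cast_prod,
    show (3 : ℚ) ^ n = ∏ _k ∈ range n, (3 : ℚ) by rw [Finset.prod_const, card_range],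
    ← Finset.prod_mul_distrib]
  refine Finset.prod_congr rfl fun k _ => ?_
  push_cast
  ring

end HG

open HG Finset in
/-- The hypergeometric series `₃F₂([1/9, 4/9, 5/9], [1/3, 1], 27²·x)` has integer
Taylor coefficients: for every `n`, `729^n (1/9)_n (4/9)_n (5/9)_n / ((1/3)_n (n!)²)`
is an integer. -/
theorem hypergeom_1_9_4_9_5_9_integer_coeffs (n : ℕ) :
    ∃ m : ℤ,
      729 ^ n * (ascPochhammer ℚ n).eval (1 / 9) * (ascPochhammer ℚ n).eval (4 / 9) *
          (ascPochhammer ℚ n).eval (5 / 9) /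
        ((ascPochhammer ℚ n).eval (1 / 3) * (Nat.factorial n : ℚ) ^ 2) = (m : ℚ) := by
  set N : ℕ := 3 ^ n * ((∏ k ∈ range n, (9 * k + 1)) * (∏ k ∈ range n, (9 * k + 4))
        * (∏ k ∈ range n, (9 * k + 5))) with hN
  set D : ℕ := (∏ k ∈ range n, (3 * k + 1)) * (n.factorial) ^ 2 with hD
  have hD0 : (D : ℚ) ≠ 0 := by
    have : 0 < D := by positivity
    exact_mod_cast this.ne'
  refine ⟨((N / D : ℕ) : ℤ), ?_⟩
  have hcast : (((N / D : ℕ) : ℤ) : ℚ) = (N : ℚ) / (D : ℚ) := by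
    rw [Int.cast_natCast, Nat.cast_div (main_dvd n) hD0]
  rw [hcast]
  have e1 := nine_pow_asc n 1
  have e4 := nine_pow_asc n 4
  have e5 := nine_pow_asc n 5
  have e3 := three_pow_asc n
  have hden : (ascPochhammer ℚ n).eval (1 / 3) * (Nat.factorial n : ℚ) ^ 2 ≠ 0 := by
    rw [asc_eval]
    have h1 : (0:ℚ) < ∏ k ∈ range n, ((1:ℚ)/3 + k) :=
      Finset.prod_pos fun k _ => by positivity
    have h2 : (0:ℚ) < (Nat.factorial n : ℚ) := by exact_mod_cast n.factorial_pos
    positivity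
  norm_num at e1 e4 e5 e3
  rw [div_eq_div_iff hden hD0, hN, hD]
  push_cast [-Nat.cast_prod]
  rw [← e1, ← e4, ← e5, ← e3, show ((729:ℚ)) = 9 ^ 3 by norm_num, ← pow_mul]
  ring
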